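/- Let x ∈ 𝔹 with F(x) ≠ 0 (so x is not a Z-eigenvector of A), let d be a Newton direction at x, and let σ ∈ (0,1). Then there exists ᾱ > 0 such that for all α ∈ (0, ᾱ], θ(x(α)) ≤ θ(x) − σ α ‖F(x)‖² < θ(x); in particular d is a curve descent direction of θ at x. -/

import Mathlib

open scoped RealInnerProductSpace

noncomputable section

/-- Euclidean space `ℝ^n`. -/
abbrev Euc (n : ℕ) : Type := EuclideanSpace ℝ (Fin n)

/-- An `m`-th order tensor on `ℝ^n`, viewed as a continuous `m`-multilinear form. -/
abbrev Tensor (m n : ℕ) : Type := ContinuousMultilinearMap ℝ (fun _ : Fin m => Euc n) ℝ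

/-- A tensor is symmetric if it is invariant under every permutation of its arguments. -/
def IsSymmTensor {m n : ℕ} (A : Tensor m n) : Prop :=
  ∀ (e : Equiv.Perm (Fin m)) (v : Fin m → Euc n), A (v ∘ e) = A v

/-- `A x^m`, the homogeneous form `A (x, …, x)`. -/
def tpow {m n : ℕ} (A : Tensor m n) (x : Euc n) : ℝ := A (fun _ => x)

/-- The last index of `Fin m`. -/
def lastIdx {m : ℕ} (_hm : 2 ≤ m) : Fin m := ⟨m - 1, by omega⟩

/-- The second to last index of `Fin m`. -/
def sndIdx {m : ℕ} (_hm : 2 ≤ m) : Fin m := ⟨m - 2, by omega⟩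

lemma sndIdx_ne_lastIdx {m : ℕ} (hm : 2 ≤ m) : sndIdx hm ≠ lastIdx hm := by
  simp only [sndIdx, lastIdx, Fin.mk.injEq, ne_eq]
  omega

/-- `A x^{m-1}`: the unique vector with `⟪A x^{m-1}, v⟫ = A (x, …, x, v)` for all `v`. -/
def tvec {m n : ℕ} (A : Tensor m n) (hm : 2 ≤ m) (x : Euc n) : Euc n :=
  (InnerProductSpace.toDual ℝ (Euc n)).symm
    (A.toContinuousLinearMap (fun _ => x) (lastIdx hm))

/-- `F(x) = A x^{m-1} - (A x^m) • x`. -/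
def Fvec {m n : ℕ} (A : Tensor m n) (hm : 2 ≤ m) (x : Euc n) : Euc n :=
  tvec A hm x - tpow A x • x

/-- `φ(x) = (1/m) A x^m`. -/
def phi {m n : ℕ} (A : Tensor m n) (x : Euc n) : ℝ := (1 / (m : ℝ)) * tpow A x

/-- Orthogonal projection `P_x d = d - ⟪x, d⟫ x` (for `x` a unit vector). -/
def Pproj {n : ℕ} (x d : Euc n) : Euc n := d - ⟪x, d⟫ • x

/-- `x(α) = (x + α d)/‖x + α d‖`, the projection of `x + α d` onto the unit sphere. -/
def xcur {n : ℕ} (x d : Euc n) (α : ℝ) : Euc n := ‖x + α • d‖⁻¹ • (x + α • d)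

/-- `w(x, d)`: the unique vector with `⟪w(x, d), v⟫ = A (x, …, x, d, v)` for all `v`. -/
def wvec {m n : ℕ} (A : Tensor m n) (hm : 2 ≤ m) (x d : Euc n) : Euc n :=
  (InnerProductSpace.toDual ℝ (Euc n)).symm
    (A.toContinuousLinearMap (Function.update (fun _ => x) (sndIdx hm) d) (lastIdx hm))

/-- `A (x, …, x, d, d)`. -/
def A2 {m n : ℕ} (A : Tensor m n) (hm : 2 ≤ m) (x d : Euc n) : ℝ :=
  A (Function.update (Function.update (fun _ => x) (sndIdx hm) d) (lastIdx hm) d)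

lemma wvec_add {m n : ℕ} (A : Tensor m n) (hm : 2 ≤ m) (x d₁ d₂ : Euc n) :
    wvec A hm x (d₁ + d₂) = wvec A hm x d₁ + wvec A hm x d₂ := by
  unfold wvec
  rw [← map_add]
  congr 1
  ext v
  simp only [ContinuousMultilinearMap.toContinuousLinearMap_apply, ContinuousLinearMap.add_apply]
  rw [Function.update_comm (sndIdx_ne_lastIdx hm), Function.update_comm (sndIdx_ne_lastIdx hm),
    Function.update_comm (sndIdx_ne_lastIdx hm)]
  exact A.map_update_add _ _ _ _

lemma wvec_smul {m n : ℕ} (A : Tensor m n) (hm : 2 ≤ m) (x : Euc n) (c : ℝ) (d : Euc n) :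
    wvec A hm x (c • d) = c • wvec A hm x d := by
  unfold wvec
  rw [← map_smul]
  congr 1
  ext v
  simp only [ContinuousMultilinearMap.toContinuousLinearMap_apply,
    ContinuousLinearMap.smul_apply, smul_eq_mul]
  rw [Function.update_comm (sndIdx_ne_lastIdx hm), Function.update_comm (sndIdx_ne_lastIdx hm)]
  exact A.map_update_smul _ _ _ _

/-- The Jacobian `F'(x) d = (m-1) w(x,d) - (A x^m) d - m ⟪A x^{m-1}, d⟫ x`. -/
def FderivL {m n : ℕ} (A : Tensor m n) (hm : 2 ≤ m) (x : Euc n) : Euc n →L[ℝ] Euc n :=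
  LinearMap.toContinuousLinearMap
  { toFun := fun d =>
      ((m : ℝ) - 1) • wvec A hm x d - tpow A x • d - ((m : ℝ) * ⟪tvec A hm x, d⟫) • x
    map_add' := by
      intro d₁ d₂
      try simp only
      rw [wvec_add, inner_add_right]
      module
    map_smul' := by
      intro c d
      simp only [RingHom.id_apply]
      rw [wvec_smul, inner_smul_right]
      module }

/-- A Newton direction at `x`: `⟪x, d⟫ = 0` and `P_x (F'(x) d + F(x)) = 0`. -/
def NewtonDir {m n : ℕ} (A : Tensor m n) (hm : 2 ≤ m) (x d : Euc n) : Prop :=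
  ⟪x, d⟫ = 0 ∧ Pproj x (FderivL A hm x d + Fvec A hm x) = 0

/-- The residual function `θ(x) = (1/2)‖F(x)‖²`. -/
def theta {m n : ℕ} (A : Tensor m n) (hm : 2 ≤ m) (x : Euc n) : ℝ :=
  (1 / 2) * ‖Fvec A hm x‖ ^ 2

/-- Assumption (A): second-order sufficient condition at the KKT point `x̄`. -/
def AssumpA {m n : ℕ} (A : Tensor m n) (hm : 2 ≤ m) (xb : Euc n) (lam : ℝ) : Prop :=
  ‖xb‖ = 1 ∧ tvec A hm xb = lam • xb ∧ lam = tpow A xb ∧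
    ∀ d : Euc n, d ≠ 0 → ⟪xb, d⟫ = 0 →
      0 < ((m : ℝ) - 1) * A2 A hm xb d - lam * ‖d‖ ^ 2

end


noncomputable section AuxLemmas

variable {m n : ℕ}

lemma inner_tvec (A : Tensor m n) (hm : 2 ≤ m) (x v : Euc n) :
    ⟪tvec A hm x, v⟫ = A (Function.update (fun _ => x) (lastIdx hm) v) := by
  rw [tvec, InnerProductSpace.toDual_symm_apply,
    ContinuousMultilinearMap.toContinuousLinearMap_apply]

lemma inner_wvec (A : Tensor m n) (hm : 2 ≤ m) (x d v : Euc n) :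
    ⟪wvec A hm x d, v⟫
      = A (Function.update (Function.update (fun _ => x) (sndIdx hm) d) (lastIdx hm) v) := by
  rw [wvec, InnerProductSpace.toDual_symm_apply,
    ContinuousMultilinearMap.toContinuousLinearMap_apply]

lemma inner_tvec_self (A : Tensor m n) (hm : 2 ≤ m) (x : Euc n) :
    ⟪tvec A hm x, x⟫ = tpow A x := by
  rw [inner_tvec, tpow]
  exact congrArg A (Function.update_eq_self _ _)

lemma symm_update_one {A : Tensor m n} (hA : IsSymmTensor A) (x v : Euc n) (i k : Fin m) :
    A (Function.update (fun _ => x) i v) = A (Function.update (fun _ => x) k v) := by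
  rcases eq_or_ne i k with rfl | hik
  · rfl
  · have h := hA (Equiv.swap i k) (Function.update (fun _ => x) k v)
    rw [← h]
    congr 1
    funext j
    simp only [Function.comp_apply, Equiv.swap_apply_def, Function.update_apply]
    split_ifs <;> simp_all

lemma symm_update_two {A : Tensor m n} (hA : IsSymmTensor A) (hm : 2 ≤ m) (x c v : Euc n)
    (i : Fin m) (hi : i ≠ lastIdx hm) :
    A (Function.update (Function.update (fun _ => x) (lastIdx hm) c) i v)
      = A (Function.update (Function.update (fun _ => x) (sndIdx hm) v) (lastIdx hm) c) := by
  rcases eq_or_ne i (sndIdx hm) with rfl | his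
  · rw [Function.update_comm hi]
  · have hsl := sndIdx_ne_lastIdx hm
    have h := hA (Equiv.swap i (sndIdx hm))
      (Function.update (Function.update (fun _ => x) (sndIdx hm) v) (lastIdx hm) c)
    rw [← h]
    congr 1
    funext j
    simp only [Function.comp_apply, Equiv.swap_apply_def, Function.update_apply]
    split_ifs <;> simp_all

lemma hasFDerivAt_tpow (A : Tensor m n) (hm : 2 ≤ m) (hA : IsSymmTensor A) (x : Euc n) :
    HasFDerivAt (tpow A) ((m : ℝ) • innerSL ℝ (tvec A hm x)) x := by
  have hdiag : HasFDerivAt (fun y : Euc n => (fun _ : Fin m => y))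
      (ContinuousLinearMap.pi fun _ : Fin m => ContinuousLinearMap.id ℝ (Euc n)) x :=
    (ContinuousLinearMap.pi fun _ : Fin m => ContinuousLinearMap.id ℝ (Euc n)).hasFDerivAt
  have h := (A.hasFDerivAt (x := fun _ : Fin m => x)).comp x hdiag
  have hfun : tpow A = (⇑A ∘ fun y : Euc n => (fun _ : Fin m => y)) := rfl
  rw [hfun]
  refine h.congr_fderiv ?_
  ext v
  simp only [ContinuousLinearMap.smul_apply, innerSL_apply_apply,
    ContinuousLinearMap.coe_comp', Function.comp_apply, ContinuousLinearMap.pi_apply,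
    ContinuousLinearMap.id_apply, ContinuousMultilinearMap.linearDeriv_apply, smul_eq_mul]
  rw [Finset.sum_congr rfl (fun i _ => symm_update_one hA x v i (lastIdx hm))]
  rw [Finset.sum_const, Finset.card_univ, Fintype.card_fin, inner_tvec]
  simp [nsmul_eq_mul]

def projCLM (hm : 2 ≤ m) (n : ℕ) : Euc n →L[ℝ] (Fin m → Euc n) :=
  ContinuousLinearMap.pi fun j => if j = lastIdx hm then 0 else ContinuousLinearMap.id ℝ (Euc n)

lemma hasFDerivAt_slot (A : Tensor m n) (hm : 2 ≤ m) (c x : Euc n) :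
    HasFDerivAt (fun y : Euc n => A (Function.update (fun _ => y) (lastIdx hm) c))
      ((A.linearDeriv (Function.update (fun _ => x) (lastIdx hm) c)).comp (projCLM hm n)) x := by
  have hg : HasFDerivAt (fun y : Euc n => Function.update (fun _ : Fin m => y) (lastIdx hm) c)
      (projCLM hm n) x := by
    have hfun : (fun y : Euc n => Function.update (fun _ : Fin m => y) (lastIdx hm) c)
        = fun y => projCLM hm n y + Function.update (fun _ : Fin m => (0 : Euc n)) (lastIdx hm) c := by
      funext y j
      simp only [projCLM, ContinuousLinearMap.pi_apply, Function.update_apply, Pi.add_apply]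
      split_ifs <;> simp
    rw [hfun]
    exact ((projCLM hm n).hasFDerivAt).add_const _
  exact (A.hasFDerivAt (x := Function.update (fun _ => x) (lastIdx hm) c)).comp x hg

lemma slot_deriv_apply (A : Tensor m n) (hm : 2 ≤ m) (hA : IsSymmTensor A) (c x v : Euc n) :
    ((A.linearDeriv (Function.update (fun _ => x) (lastIdx hm) c)).comp (projCLM hm n)) v
      = ((m : ℝ) - 1) * ⟪wvec A hm x v, c⟫ := by
  rw [ContinuousLinearMap.coe_comp', Function.comp_apply,
    ContinuousMultilinearMap.linearDeriv_apply]
  have hterm : ∀ j : Fin m,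
      A (Function.update (Function.update (fun _ => x) (lastIdx hm) c) j (projCLM hm n v j))
        = if j = lastIdx hm then 0 else ⟪wvec A hm x v, c⟫ := by
    intro j
    by_cases hj : j = lastIdx hm
    · subst hj
      have : projCLM hm n v (lastIdx hm) = 0 := by simp [projCLM]
      rw [this, if_pos rfl]
      exact A.map_update_zero _ _
    · have : projCLM hm n v j = v := by simp [projCLM, hj]
      rw [this, symm_update_two hA hm x c v j hj, if_neg hj, inner_wvec]
  rw [Finset.sum_congr rfl fun j _ => hterm j]
  have hsplit : (∑ j : Fin m, if j = lastIdx hm then (0:ℝ) else ⟪wvec A hm x v, c⟫)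
      = ∑ j : Fin m, (⟪wvec A hm x v, c⟫ - if j = lastIdx hm then ⟪wvec A hm x v, c⟫ else 0) := by
    refine Finset.sum_congr rfl fun j _ => ?_
    split_ifs <;> ring
  rw [hsplit, Finset.sum_sub_distrib, Finset.sum_const,
    Finset.sum_ite_eq' Finset.univ (lastIdx hm) (fun _ => ⟪wvec A hm x v, c⟫)]
  simp only [Finset.card_univ, Fintype.card_fin, Finset.mem_univ, if_true, nsmul_eq_mul]
  ring

lemma hasFDerivAt_Fvec (A : Tensor m n) (hm : 2 ≤ m) (hA : IsSymmTensor A) (x : Euc n) :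
    HasFDerivAt (Fvec A hm) (FderivL A hm x) x := by
  classical
  set b := EuclideanSpace.basisFun (Fin n) ℝ with hb
  have htvec_eq : tvec A hm = fun y =>
      ∑ i : Fin n, (A (Function.update (fun _ : Fin m => y) (lastIdx hm) (b i))) • (b i : Euc n) := by
    funext y
    conv_lhs => rw [← b.sum_repr' (tvec A hm y)]
    refine Finset.sum_congr rfl fun i _ => ?_
    rw [real_inner_comm, inner_tvec]
  have hT : HasFDerivAt (tvec A hm)
      (∑ i : Fin n, ((A.linearDeriv (Function.update (fun _ : Fin m => x) (lastIdx hm) (b i))).comp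
        (projCLM hm n)).smulRight (b i : Euc n)) x := by
    rw [htvec_eq]
    exact HasFDerivAt.fun_sum (fun i _ => (hasFDerivAt_slot A hm (b i) x).smul_const (b i : Euc n))
  have hsm : HasFDerivAt (fun y : Euc n => tpow A y • y)
      (tpow A x • ContinuousLinearMap.id ℝ (Euc n)
        + ((m : ℝ) • innerSL ℝ (tvec A hm x)).smulRight x) x :=
    (hasFDerivAt_tpow A hm hA x).smul (hasFDerivAt_id x)
  have hF := hT.sub hsm
  have hFveq : Fvec A hm = fun y => tvec A hm y - tpow A y • y := rfl
  rw [hFveq]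
  refine hF.congr_fderiv ?_
  refine ContinuousLinearMap.ext fun v => ?_
  have hTv : (∑ i : Fin n, ((A.linearDeriv (Function.update (fun _ : Fin m => x) (lastIdx hm)
      (b i))).comp (projCLM hm n)).smulRight (b i : Euc n)) v
        = ((m : ℝ) - 1) • wvec A hm x v := by
    rw [ContinuousLinearMap.sum_apply]
    have : ∀ i : Fin n, (((A.linearDeriv (Function.update (fun _ : Fin m => x) (lastIdx hm)
        (b i))).comp (projCLM hm n)).smulRight (b i : Euc n)) v
          = ((m : ℝ) - 1) • (⟪b i, wvec A hm x v⟫ • (b i : Euc n)) := by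
      intro i
      rw [ContinuousLinearMap.smulRight_apply, slot_deriv_apply A hm hA (b i) x v,
        real_inner_comm, mul_smul]
    rw [Finset.sum_congr rfl fun i _ => this i, ← Finset.smul_sum, b.sum_repr' (wvec A hm x v)]
  have hFdv : FderivL A hm x v
      = ((m : ℝ) - 1) • wvec A hm x v - tpow A x • v - ((m : ℝ) * ⟪tvec A hm x, v⟫) • x := rfl
  rw [hFdv]
  simp only [ContinuousLinearMap.sub_apply, ContinuousLinearMap.add_apply,
    ContinuousLinearMap.smul_apply, ContinuousLinearMap.id_apply,
    ContinuousLinearMap.smulRight_apply, innerSL_apply_apply, hTv, smul_eq_mul]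
  module

end AuxLemmas

/-- a Newton direction at a non-eigenvector is a curve descent direction of the
residual function `θ`, with the Armijo-type inequality for all sufficiently small `α > 0`. -/
theorem stmt18 {m n : ℕ} (hn : 1 ≤ n) (hm : 2 ≤ m) (A : Tensor m n) (hA : IsSymmTensor A)
    (x : Euc n) (hx : ‖x‖ = 1) (hFx : Fvec A hm x ≠ 0)
    (d : Euc n) (hNd : NewtonDir A hm x d) (σ : ℝ) (hσ : σ ∈ Set.Ioo (0 : ℝ) 1) :
    ∃ αbar > 0, ∀ α ∈ Set.Ioc (0 : ℝ) αbar,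
      theta A hm (xcur x d α) ≤ theta A hm x - σ * α * ‖Fvec A hm x‖ ^ 2 ∧
      theta A hm (xcur x d α) < theta A hm x := by
  obtain ⟨hxd, hPN⟩ := hNd
  obtain ⟨hσ0, hσ1⟩ := hσ
  have hx0 : xcur x d 0 = x := by simp [xcur, hx]
  have hF2 : (0:ℝ) < ‖Fvec A hm x‖ ^ 2 := pow_pos (norm_pos_iff.mpr hFx) 2
  have hFxx : ⟪Fvec A hm x, x⟫ = 0 := by
    rw [Fvec, inner_sub_left, inner_tvec_self, real_inner_smul_left,
      real_inner_self_eq_norm_sq, hx]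
    ring
  have hNrel : FderivL A hm x d + Fvec A hm x
      = ⟪x, FderivL A hm x d + Fvec A hm x⟫ • x := by
    have h := hPN
    rw [Pproj, sub_eq_zero] at h
    exact h
  have hkey : ⟪Fvec A hm x, FderivL A hm x d⟫ = -‖Fvec A hm x‖ ^ 2 := by
    have h1 : ⟪Fvec A hm x, FderivL A hm x d + Fvec A hm x⟫ = 0 := by
      rw [hNrel, real_inner_smul_right, hFxx, mul_zero]
    rw [inner_add_right, real_inner_self_eq_norm_sq] at h1
    linarith
  have hr : HasDerivAt (fun α : ℝ => x + α • d) d 0 := by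
    have h := ((hasDerivAt_id (0:ℝ)).smul_const d).const_add x
    simpa using h
  have hnsq : HasDerivAt (fun α : ℝ => ‖x + α • d‖ ^ 2) 0 0 := by
    have h := hr.norm_sq
    simpa [hxd] using h
  have hnrm : HasDerivAt (fun α : ℝ => ‖x + α • d‖) 0 0 := by
    have h := hnsq.sqrt (by simp [hx])
    have hfun : (fun α : ℝ => Real.sqrt (‖x + α • d‖ ^ 2)) = fun α : ℝ => ‖x + α • d‖ := by
      funext α; exact Real.sqrt_sq (norm_nonneg _)
    rw [hfun] at h
    simpa using h
  have hinv : HasDerivAt (fun α : ℝ => ‖x + α • d‖⁻¹) 0 0 := by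
    have h := hnrm.fun_inv (by simp [hx])
    simpa using h
  have hxc : HasDerivAt (fun α : ℝ => xcur x d α) d 0 := by
    have h := hinv.fun_smul hr
    simp only [xcur]
    simpa [hx] using h
  have hFc : HasDerivAt (fun α : ℝ => Fvec A hm (xcur x d α)) (FderivL A hm x d) 0 := by
    have hFd := hasFDerivAt_Fvec A hm hA x
    rw [← hx0] at hFd
    have h := hFd.comp_hasDerivAt 0 hxc
    rw [hx0] at h
    exact h
  have hth : HasDerivAt (fun α : ℝ => theta A hm (xcur x d α)) (-‖Fvec A hm x‖ ^ 2) 0 := by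
    have h := hFc.norm_sq.const_mul (1/2 : ℝ)
    simp only [hx0] at h
    have hval : (1/2 : ℝ) * (2 * ⟪Fvec A hm x, FderivL A hm x d⟫) = -‖Fvec A hm x‖ ^ 2 := by
      rw [hkey]; ring
    rw [hval] at h
    exact h
  have hslope := hasDerivAt_iff_tendsto_slope.mp hth
  have hlt : -‖Fvec A hm x‖ ^ 2 < -(σ * ‖Fvec A hm x‖ ^ 2) := by nlinarith
  have hev : ∀ᶠ α in nhdsWithin (0:ℝ) {(0:ℝ)}ᶜ,
      slope (fun α => theta A hm (xcur x d α)) 0 α < -(σ * ‖Fvec A hm x‖ ^ 2) :=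
    hslope.eventually_lt_const hlt
  rw [eventually_nhdsWithin_iff] at hev
  obtain ⟨ε, hε, hball⟩ := Metric.eventually_nhds_iff.mp hev
  refine ⟨ε/2, by positivity, fun α hα => ?_⟩
  obtain ⟨hα0, hαε⟩ := hα
  have hαne : α ≠ 0 := ne_of_gt hα0
  have hs := hball (show dist α 0 < ε by
      rw [Real.dist_eq, sub_zero, abs_of_pos hα0]; linarith)
    (Set.mem_compl_singleton_iff.mpr hαne)
  rw [slope_def_field] at hs
  simp only [hx0, sub_zero] at hs
  have h2 : theta A hm (xcur x d α) - theta A hm x < -(σ * ‖Fvec A hm x‖ ^ 2) * α :=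
    (div_lt_iff₀ hα0).mp hs
  have hcomm : σ * α * ‖Fvec A hm x‖ ^ 2 = -(-(σ * ‖Fvec A hm x‖ ^ 2) * α) := by ring
  have hpos : 0 < σ * α * ‖Fvec A hm x‖ ^ 2 := by positivity
  constructor
  · rw [hcomm]; linarith
  · linarith [hcomm, hpos]
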